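/- Let a ∈ ℝ and b ∈ ℝ with b ≠ 0. Then for every n ≥ 1 the polynomial identity Γ_n^{a,b}(x) = (n!/b^n) · Σ_{k=0}^{n−1} (−1)^{n−k} · (n−1 choose k) · L_{n−k}^{a−1}(b·x) holds in ℝ[x] (and Γ_0^{a,b}(x) = L_0^{a−1}(b·x) = 1). -/

import Mathlib

open Polynomial Finset

lemma desc_smeval_prod (k : ℕ) (r : ℝ) :
    (descPochhammer ℤ k).smeval r = ∏ i ∈ Finset.range k, (r - i) := by
  induction k with
  | zero => simp [descPochhammer_zero, smeval_one]
  | succ n ih =>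
    rw [descPochhammer_succ_right, smeval_mul, ih, Finset.prod_range_succ, smeval_sub,
      smeval_X, smeval_natCast]
    simp

lemma gch_eq_ring_choose (α : ℝ) (k : ℕ) :
    (∏ i ∈ Finset.range k, (α - i)) / (k.factorial : ℝ) = Ring.choose α k := by
  rw [← desc_smeval_prod, Ring.descPochhammer_eq_factorial_smul_choose, nsmul_eq_mul,
    mul_div_cancel_left₀]
  exact_mod_cast k.factorial_ne_zero

lemma vdm (x y : ℝ) (m : ℕ) :
    ∑ k ∈ Finset.range (m + 1), Ring.choose x k * Ring.choose y (m - k)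
      = Ring.choose (x + y) m := by
  rw [Ring.add_choose_eq m (Commute.all x y),
    Finset.Nat.sum_antidiagonal_eq_sum_range_succ_mk]

lemma sign_flip (c : ℝ) (r : ℕ) :
    (∏ i ∈ Finset.range r, ((r : ℝ) + c - i))
      = (-1) ^ r * ∏ i ∈ Finset.range r, (-(c + 1) - i) := by
  rw [← Finset.prod_range_reflect (fun i => ((r : ℝ) + c - i))]
  rw [Finset.pow_eq_prod_const, ← Finset.prod_mul_distrib]
  refine Finset.prod_congr rfl fun i hi => ?_
  simp only [Finset.mem_range] at hi
  have : ((r - 1 - i : ℕ) : ℝ) = r - 1 - i := by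
    push_cast [Nat.cast_sub (by omega : i ≤ r - 1), Nat.cast_sub (by omega : 1 ≤ r)]; ring
  rw [this]; ring

lemma gch_shift (c : ℝ) (r : ℕ) :
    (∏ i ∈ Finset.range r, ((r : ℝ) + c - i)) / (r.factorial : ℝ)
      = (-1) ^ r * Ring.choose (-(c + 1)) r := by
  rw [sign_flip, mul_div_assoc, gch_eq_ring_choose]

/-- Let `gchoose α k = α(α-1)⋯(α-k+1)/k!` be the generalized
binomial coefficient, `L α n = ∑_{m≤n} (-1)^m (gchoose (n+α) (n-m)) x^m/m!`
the generalized Laguerre polynomial, and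
`Γ n = n! ∑_{k≤n} (gchoose a (n-k)) (x^k/k!) (-1/b)^(n-k)` the Wick polynomial
of the `Gamma(a,b)` law. Then `Γ 0 = L (a-1) 0 ∘ (b·x) = 1` and, for `n ≥ 1`,
`Γ n = (n!/b^n) ∑_{k=0}^{n-1} (-1)^(n-k) (n-1 choose k) (L (a-1) (n-k)) (b·x)`. -/
theorem stmt_11 (a b : ℝ) (hb : b ≠ 0)
    (gchoose : ℝ → ℕ → ℝ)
    (hgchoose : ∀ (α : ℝ) (k : ℕ),
      gchoose α k = (∏ i ∈ Finset.range k, (α - i)) / (k.factorial : ℝ))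
    (L : ℝ → ℕ → Polynomial ℝ)
    (hL : ∀ (α : ℝ) (n : ℕ), L α n =
      ∑ j ∈ Finset.range (n + 1),
        Polynomial.C ((-1 : ℝ) ^ j * gchoose ((n : ℝ) + α) (n - j) /
          (j.factorial : ℝ)) * Polynomial.X ^ j)
    (G : ℕ → Polynomial ℝ)
    (hG : ∀ n : ℕ, G n =
      ∑ k ∈ Finset.range (n + 1),
        Polynomial.C ((n.factorial : ℝ) * gchoose a (n - k) *
          (-1 / b) ^ (n - k) / (k.factorial : ℝ)) * Polynomial.X ^ k) :
    (G 0 = 1 ∧ (L (a - 1) 0).comp (Polynomial.C b * Polynomial.X) = 1) ∧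
    ∀ n : ℕ, 1 ≤ n →
      G n = Polynomial.C ((n.factorial : ℝ) / b ^ n) *
        ∑ k ∈ Finset.range n,
          Polynomial.C ((-1 : ℝ) ^ (n - k) * ((n - 1).choose k : ℝ)) *
            (L (a - 1) (n - k)).comp (Polynomial.C b * Polynomial.X) := by
  have gch_ring : ∀ (α : ℝ) (k : ℕ), gchoose α k = Ring.choose α k := by
    intro α k; rw [hgchoose, gch_eq_ring_choose]
  constructor
  · constructor
    · rw [hG 0]; simp [hgchoose]
    · rw [hL]; simp [hgchoose]
  intro n hn
  -- composed Laguerre polynomials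
  have hcomp : ∀ m : ℕ, (L (a - 1) m).comp (Polynomial.C b * Polynomial.X)
      = ∑ j ∈ Finset.range (m + 1),
          Polynomial.C ((-1 : ℝ) ^ j * gchoose ((m : ℝ) + (a - 1)) (m - j) /
            (j.factorial : ℝ) * b ^ j) * Polynomial.X ^ j := by
    intro m
    rw [hL]
    rw [Polynomial.sum_comp]
    refine Finset.sum_congr rfl fun j hj => ?_
    rw [Polynomial.mul_comp, Polynomial.C_comp, Polynomial.pow_comp, Polynomial.X_comp, mul_pow, ← Polynomial.C_pow,
      Polynomial.C_mul, mul_assoc]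
  ext i
  rw [hG n]
  simp only [hcomp, Polynomial.finset_sum_coeff, Polynomial.coeff_C_mul, Polynomial.coeff_X_pow,
    mul_ite, mul_one, mul_zero, Finset.sum_ite_eq, Finset.sum_ite_eq', Finset.mem_range]
  by_cases hi : i ≤ n
  · rw [if_pos (by omega)]
    set m := n - i with hm
    have key : ∀ k ∈ Finset.range n,
        (if i < n - k + 1 then
            (-1 : ℝ) ^ (n - k) * ((n - 1).choose k : ℝ) *
              ((-1 : ℝ) ^ i * gchoose (((n - k : ℕ) : ℝ) + (a - 1)) (n - k - i) /
                (i.factorial : ℝ) * b ^ i) else 0)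
        = if k ≤ m then
            Ring.choose (((n - 1 : ℕ) : ℝ)) k * Ring.choose (-((i : ℝ) + a)) (m - k) *
              (b ^ i / (i.factorial : ℝ)) else 0 := by
      intro k hk
      simp only [Finset.mem_range] at hk
      rcases le_or_gt k m with hkm | hkm
      · rw [if_pos (by omega), if_pos hkm]
        have hc1 : ((n - k : ℕ) : ℝ) + (a - 1) = ((m - k : ℕ) : ℝ) + ((i : ℝ) + a - 1) := by
          have h1 : ((n - k : ℕ) : ℝ) = (n : ℝ) - k := by
            push_cast [Nat.cast_sub (by omega : k ≤ n)]; ring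
          have h2 : ((m - k : ℕ) : ℝ) = (n : ℝ) - i - k := by
            rw [Nat.cast_sub hkm, hm, Nat.cast_sub (by omega : i ≤ n)]
          rw [h1, h2]; ring
        have hc2 : n - k - i = m - k := by omega
        rw [hc2, hc1, hgchoose, gch_shift]
        have hc3 : -(((i : ℝ) + a - 1) + 1) = -((i : ℝ) + a) := by ring
        rw [hc3, ← Ring.choose_natCast (R := ℝ) (n - 1) k]
        have hsgn : ((-1 : ℝ)) ^ (n - k) * ((-1 : ℝ)) ^ i * ((-1 : ℝ)) ^ (m - k) = 1 := by
          rw [← pow_add, ← pow_add, show (n - k) + i + (m - k) = 2 * (n - k) by omega,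
            pow_mul]
          norm_num
        linear_combination (Ring.choose (((n - 1 : ℕ) : ℝ)) k *
          Ring.choose (-((i : ℝ) + a)) (m - k) * b ^ i / (i.factorial : ℝ)) * hsgn
      · rw [if_neg (by omega), if_neg (by omega)]
    rw [Finset.sum_congr rfl key]
    have e1 : ∑ k ∈ Finset.range n, (if k ≤ m then
          Ring.choose (((n - 1 : ℕ) : ℝ)) k * Ring.choose (-((i : ℝ) + a)) (m - k) *
            (b ^ i / (i.factorial : ℝ)) else 0)
        = ∑ k ∈ Finset.range (n + 1), (if k ≤ m then
          Ring.choose (((n - 1 : ℕ) : ℝ)) k * Ring.choose (-((i : ℝ) + a)) (m - k) *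
            (b ^ i / (i.factorial : ℝ)) else 0) := by
      rw [Finset.sum_range_succ]
      have : (if n ≤ m then
          Ring.choose (((n - 1 : ℕ) : ℝ)) n * Ring.choose (-((i : ℝ) + a)) (m - n) *
            (b ^ i / (i.factorial : ℝ)) else 0) = 0 := by
        split_ifs with h
        · rw [Ring.choose_natCast, Nat.choose_eq_zero_of_lt (by omega)]
          simp
        · rfl
      rw [this, add_zero]
    have e2 : ∑ k ∈ Finset.range (n + 1), (if k ≤ m then
          Ring.choose (((n - 1 : ℕ) : ℝ)) k * Ring.choose (-((i : ℝ) + a)) (m - k) *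
            (b ^ i / (i.factorial : ℝ)) else 0)
        = ∑ k ∈ Finset.range (m + 1),
          Ring.choose (((n - 1 : ℕ) : ℝ)) k * Ring.choose (-((i : ℝ) + a)) (m - k) *
            (b ^ i / (i.factorial : ℝ)) := by
      rw [← Finset.sum_subset (Finset.range_subset_range.mpr (by omega : m + 1 ≤ n + 1))
        (fun x hx hx' => by
          rw [if_neg]
          simp only [Finset.mem_range] at hx'
          omega)]
      exact Finset.sum_congr rfl fun x hx => if_pos (by
        simp only [Finset.mem_range] at hx; omega)
    rw [e1, e2, ← Finset.sum_mul, vdm]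
    have harg : ((n - 1 : ℕ) : ℝ) + -((i : ℝ) + a) = ((m : ℕ) : ℝ) + (-1 - a) := by
      push_cast [Nat.cast_sub hn, Nat.cast_sub (by omega : i ≤ n), hm]; ring
    have hfinal : Ring.choose (((m : ℕ) : ℝ) + (-1 - a)) m = (-1 : ℝ) ^ m * gchoose a m := by
      rw [← gch_eq_ring_choose, sign_flip, hgchoose, mul_div_assoc]
      have : -((-1 - a : ℝ) + 1) = a := by ring
      rw [this]
    rw [harg, hfinal]
    have hbn : (b : ℝ) ^ n = b ^ m * b ^ i := by
      rw [← pow_add, show m + i = n by omega]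
    have hneg : ((-1 : ℝ) / b) ^ m = (-1 : ℝ) ^ m / b ^ m := div_pow _ _ _
    rw [hneg, hbn]
    have hb1 : (b : ℝ) ^ m ≠ 0 := pow_ne_zero _ hb
    have hb2 : (b : ℝ) ^ i ≠ 0 := pow_ne_zero _ hb
    have hf : ((i.factorial : ℝ)) ≠ 0 := by exact_mod_cast i.factorial_ne_zero
    field_simp
  · rw [if_neg (by omega)]
    rw [Finset.sum_eq_zero, mul_zero]
    intro k hk
    simp only [Finset.mem_range] at hk
    rw [if_neg (by omega)]
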